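/- Let x₁, x₂ ∈ S_n and d₁, d₂ > 0 be such that S(x₁,d₁) ∩ S(x₂,d₂) ≠ ∅. Then S(x₁,d₁) ∩ S(x₂,d₂) = S(x₃,d₃), where d₃ = (1 + ∑_{i=1}^n min{d₁ − x₁(i), d₂ − x₂(i)})/n and x₃(i) = max{x₁(i) − d₁, x₂(i) − d₂} + d₃ for each i ∈ [n]. -/

import Mathlib

open InnerProductSpace Finset

noncomputable section

abbrev Euc (n : ℕ) := EuclideanSpace ℝ (Fin n)

/-- The all-ones vector. -/
def ones (n : ℕ) : Euc n := WithLp.toLp 2 fun _ => 1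

/-- The unit simplex. -/
def unitSimplex (n : ℕ) : Set (Euc n) := {x | (∀ i, 0 ≤ x i) ∧ ∑ i, x i = 1}

/-- The simplex ball. -/
def simplexBall (n : ℕ) (x : Euc n) (d : ℝ) : Set (Euc n) :=
  {y | ∃ l ∈ unitSimplex n, y = (x - d • ones n) + ((n : ℝ) * d) • l}

lemma mem_simplexBall_iff {n : ℕ} (hn : 0 < n) (x : Euc n) {d : ℝ} (hd : 0 ≤ d) (y : Euc n) :
    y ∈ simplexBall n x d ↔ (∀ i, x i - d ≤ y i) ∧ ∑ i, y i = ∑ i, x i := by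
  have hn' : (n : ℝ) ≠ 0 := Nat.cast_ne_zero.mpr hn.ne'
  constructor
  · rintro ⟨l, ⟨hl0, hl1⟩, rfl⟩
    constructor
    · intro i
      have h0 : 0 ≤ (n : ℝ) * d * l i := by
        have := hl0 i; positivity
      simp only [PiLp.add_apply, PiLp.sub_apply, PiLp.smul_apply, smul_eq_mul, ones, PiLp.toLp_apply]
      linarith
    · simp only [PiLp.add_apply, PiLp.sub_apply, PiLp.smul_apply, smul_eq_mul, ones, PiLp.toLp_apply,
        Finset.sum_add_distrib, Finset.sum_sub_distrib, ← Finset.mul_sum, hl1]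
      simp [mul_comm]
  · rintro ⟨h1, h2⟩
    rcases eq_or_lt_of_le hd with h | h
    · -- d = 0, y = x
      subst h
      have hyx : y = x := by
        have hsum : ∑ i, (y i - x i) = 0 := by
          rw [Finset.sum_sub_distrib, h2, sub_self]
        have hpos : ∀ i ∈ Finset.univ, 0 ≤ y i - x i := fun i _ => by
          have := h1 i; linarith
        have := (Finset.sum_eq_zero_iff_of_nonneg hpos).mp hsum
        ext i
        have := this i (Finset.mem_univ i)
        linarith
      exact ⟨WithLp.toLp 2 fun _ => 1 / (n : ℝ), ⟨fun i => by simp only [PiLp.toLp_apply]; positivity, by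
        simp [Finset.sum_const, hn']⟩, by simp [hyx]⟩
    · refine ⟨WithLp.toLp 2 fun i => (y i - x i + d) / ((n : ℝ) * d), ⟨fun i => by
        have := h1 i
        have : 0 ≤ y i - x i + d := by linarith
        simp only [PiLp.toLp_apply]; positivity, ?_⟩, ?_⟩
      · simp only [PiLp.toLp_apply]
        rw [← Finset.sum_div]
        rw [Finset.sum_add_distrib, Finset.sum_sub_distrib, h2, sub_self, zero_add,
          Finset.sum_const, Finset.card_univ, Fintype.card_fin, nsmul_eq_mul]
        field_simp
      · ext i
        simp only [PiLp.add_apply, PiLp.sub_apply, PiLp.smul_apply, smul_eq_mul, ones, PiLp.toLp_apply]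
        field_simp; try ring

theorem simplexBall_inter_simplexBall (n : ℕ) (x₁ x₂ : Euc n)
    (hx₁ : x₁ ∈ unitSimplex n) (hx₂ : x₂ ∈ unitSimplex n)
    (d₁ d₂ : ℝ) (hd₁ : 0 < d₁) (hd₂ : 0 < d₂)
    (hne : (simplexBall n x₁ d₁ ∩ simplexBall n x₂ d₂).Nonempty) :
    simplexBall n x₁ d₁ ∩ simplexBall n x₂ d₂ =
      simplexBall n
        (WithLp.toLp 2 fun i => max (x₁ i - d₁) (x₂ i - d₂) +
          (1 + ∑ j, min (d₁ - x₁ j) (d₂ - x₂ j)) / n)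
        ((1 + ∑ j, min (d₁ - x₁ j) (d₂ - x₂ j)) / n) := by
  rcases Nat.eq_zero_or_pos n with hn | hn
  · exfalso
    obtain ⟨y, ⟨l, ⟨_, hl1⟩, _⟩, _⟩ := hne
    subst hn
    simp at hl1
  have hn' : (n : ℝ) ≠ 0 := Nat.cast_ne_zero.mpr hn.ne'
  have hnpos : (0:ℝ) < n := by positivity
  have hmaxmin : ∀ i, max (x₁ i - d₁) (x₂ i - d₂) = -min (d₁ - x₁ i) (d₂ - x₂ i) := by
    intro i
    rw [← neg_sub d₁ (x₁ i), ← neg_sub d₂ (x₂ i), max_neg_neg]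
  set s := ∑ j, min (d₁ - x₁ j) (d₂ - x₂ j) with hs
  -- nonemptiness gives 0 ≤ 1 + s
  have h1s : 0 ≤ 1 + s := by
    obtain ⟨y, hy1, hy2⟩ := hne
    rw [mem_simplexBall_iff hn x₁ hd₁.le] at hy1
    rw [mem_simplexBall_iff hn x₂ hd₂.le] at hy2
    have hsum1 : ∑ i, y i = 1 := by rw [hy1.2, hx₁.2]
    have : ∑ i, max (x₁ i - d₁) (x₂ i - d₂) ≤ ∑ i, y i := by
      apply Finset.sum_le_sum
      intro i _
      exact max_le (hy1.1 i) (hy2.1 i)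
    rw [hsum1] at this
    have h2 : ∑ i, max (x₁ i - d₁) (x₂ i - d₂) = -s := by
      rw [hs, ← Finset.sum_neg_distrib]
      exact Finset.sum_congr rfl fun i _ => hmaxmin i
    linarith [h2 ▸ this]
  have hD : 0 ≤ (1 + s) / n := by positivity
  ext y
  rw [Set.mem_inter_iff, mem_simplexBall_iff hn x₁ hd₁.le, mem_simplexBall_iff hn x₂ hd₂.le,
    mem_simplexBall_iff hn _ hD]
  simp only [PiLp.toLp_apply]
  have hsum3 : ∑ i, (max (x₁ i - d₁) (x₂ i - d₂) + (1 + s) / n) = 1 := by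
    rw [Finset.sum_add_distrib, Finset.sum_const, Finset.card_univ, Fintype.card_fin,
      nsmul_eq_mul]
    have h2 : ∑ i, max (x₁ i - d₁) (x₂ i - d₂) = -s := by
      rw [hs, ← Finset.sum_neg_distrib]
      exact Finset.sum_congr rfl fun i _ => hmaxmin i
    rw [h2]
    field_simp
    ring
  constructor
  · rintro ⟨⟨ha1, ha2⟩, ⟨hb1, hb2⟩⟩
    refine ⟨fun i => ?_, ?_⟩
    · have : max (x₁ i - d₁) (x₂ i - d₂) ≤ y i := max_le (ha1 i) (hb1 i)
      linarith
    · rw [ha2, hx₁.2, hsum3]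
  · rintro ⟨h1, h2⟩
    rw [hsum3] at h2
    constructor
    · refine ⟨fun i => ?_, by rw [h2, hx₁.2]⟩
      have := h1 i
      have hle : x₁ i - d₁ ≤ max (x₁ i - d₁) (x₂ i - d₂) := le_max_left _ _
      linarith
    · refine ⟨fun i => ?_, by rw [h2, hx₂.2]⟩
      have := h1 i
      have hle : x₂ i - d₂ ≤ max (x₁ i - d₁) (x₂ i - d₂) := le_max_right _ _
      linarith
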